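/- Let n ∈ ℕ. Let φ : ℝ → ℝ be continuous, not identically zero, vanishing outside (−2^{−4}, 2^{−4}), with ∫_ℝ x^m φ(x) dx = 0 for every integer 0 ≤ m ≤ n+1. Let ψ : ℝ → ℝ be locally integrable and suppose there are real numbers A_0 ≠ A_1 and c_0,…,c_{n−1} such that ψ(x) = A_0 (x−1/2)^n + Σ_{j=0}^{n−1} c_j (x−1/2)^j for all x ∈ [0, 1/2] and ψ(x) = A_1 (x−1/2)^n + Σ_{j=0}^{n−1} c_j (x−1/2)^j for all x ∈ [1/2, 1]. Then there exist c_0' ∈ (0,1) and a nondegenerate closed interval J ⊆ [1/4, 3/4] such that |(φ*ψ)(x)| ≥ c_0' for all x ∈ J. -/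

import Mathlib

open MeasureTheory Set Finset Real


noncomputable def Gk (φ : ℝ → ℝ) (k : ℕ) (t : ℝ) : ℝ := ∫ y in Set.Ioi t, φ y * (y - t) ^ k

lemma pow_lip (m : ℕ) {R a b : ℝ} (ha : |a| ≤ R) (hb : |b| ≤ R) :
    |a ^ (m + 1) - b ^ (m + 1)| ≤ (m + 1) * R ^ m * |a - b| := by
  induction m with
  | zero => simp
  | succ m ih =>
    have hR : 0 ≤ R := le_trans (abs_nonneg a) ha
    have key : a ^ (m + 2) - b ^ (m + 2) = a ^ (m + 1) * (a - b) + (a ^ (m + 1) - b ^ (m + 1)) * b := by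
      ring
    calc |a ^ (m + 2) - b ^ (m + 2)|
        ≤ |a ^ (m + 1)| * |a - b| + |a ^ (m + 1) - b ^ (m + 1)| * |b| := by
          rw [key]; exact (abs_add_le _ _).trans (by rw [abs_mul, abs_mul])
      _ ≤ R ^ (m + 1) * |a - b| + ((m + 1) * R ^ m * |a - b|) * R := by
          gcongr
          · rw [abs_pow]; exact pow_le_pow_left₀ (abs_nonneg a) ha _
      _ = ((m + 1 : ℕ) + 1) * R ^ (m + 1) * |a - b| := by push_cast; ring

lemma hcs {φ : ℝ → ℝ} (hs : ∀ x : ℝ, x ∉ Set.Icc (-(1/16) : ℝ) (1/16) → φ x = 0) :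
    HasCompactSupport φ := HasCompactSupport.intro isCompact_Icc hs

lemma intmul {φ : ℝ → ℝ} (hcont : Continuous φ)
    (hs : ∀ x : ℝ, x ∉ Set.Icc (-(1/16) : ℝ) (1/16) → φ x = 0)
    (p : ℝ → ℝ) (hp : Continuous p) : Integrable (fun y => φ y * p y) :=
  (hcont.mul hp).integrable_of_hasCompactSupport ((hcs hs).mul_right)

lemma G_eq_max (φ : ℝ → ℝ) (k : ℕ) (t : ℝ) :
    Gk φ (k + 1) t = ∫ y, φ y * max (y - t) 0 ^ (k + 1) := by
  rw [Gk, ← integral_indicator measurableSet_Ioi]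
  congr 1
  funext y
  by_cases h : y ∈ Set.Ioi t
  · rw [Set.indicator_of_mem h, max_eq_left (by simp at h; linarith)]
  · rw [Set.indicator_of_notMem h, max_eq_right (by simp at h; linarith),
      zero_pow (Nat.succ_ne_zero k), mul_zero]

lemma G_deriv {φ : ℝ → ℝ} (hcont : Continuous φ)
    (hs : ∀ x : ℝ, x ∉ Set.Icc (-(1/16) : ℝ) (1/16) → φ x = 0) (m : ℕ) (t₀ : ℝ) :
    HasDerivAt (Gk φ (m + 1)) (-((m : ℝ) + 1) * Gk φ m t₀) t₀ := by
  set F : ℝ → ℝ → ℝ := fun u y => φ y * max (y - u) 0 ^ (m + 1) with hF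
  set F' : ℝ → ℝ := fun y =>
    Set.indicator (Set.Ioi t₀) (fun y => -((m : ℝ) + 1) * (φ y * (y - t₀) ^ m)) y with hF'
  set bound : ℝ → ℝ := fun y => |φ y| * (((m : ℝ) + 1) * (|y| + |t₀| + 1) ^ m) with hbound
  have hub : ∀ y u : ℝ, u ∈ Metric.ball t₀ 1 → |max (y - u) 0| ≤ |y| + |t₀| + 1 := by
    intro y u hu
    rw [Metric.mem_ball, Real.dist_eq] at hu
    have h2 := abs_le.mp hu.le
    have h3 := le_abs_self y
    have h4 := neg_abs_le y
    have h5 := le_abs_self t₀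
    have h6 := neg_abs_le t₀
    rw [abs_of_nonneg (le_max_right _ _)]
    exact max_le (by linarith [h2.1]) (by positivity)
  have key := hasDerivAt_integral_of_dominated_loc_of_lip (F := F) (F' := F')
    (x₀ := t₀) (bound := bound) (s := Metric.ball t₀ 1) (Metric.ball_mem_nhds t₀ one_pos)
    (Filter.Eventually.of_forall fun u =>
      (hcont.mul (((continuous_id.sub continuous_const).max continuous_const).pow _)).aestronglyMeasurable)
    (intmul hcont hs _ (((continuous_id.sub continuous_const).max continuous_const).pow _))
    (((continuous_const.mul (hcont.mul ((continuous_id.sub continuous_const).pow m))).aestronglyMeasurable).indicator measurableSet_Ioi)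
    (Filter.Eventually.of_forall (fun y => by
      apply LipschitzOnWith.of_dist_le_mul
      intro u hu v hv
      rw [Real.dist_eq, Real.dist_eq, Real.coe_nnabs]
      have h1 : F u y - F v y = φ y * (max (y - u) 0 ^ (m+1) - max (y - v) 0 ^ (m+1)) := by
        simp only [hF]; ring
      have h2 : |max (y - u) 0 - max (y - v) 0| ≤ |u - v| := by
        have h := abs_max_sub_max_le_abs (y - u) (y - v) 0
        calc |max (y - u) 0 - max (y - v) 0| ≤ |(y - u) - (y - v)| := h
          _ = |v - u| := by ring_nf
          _ = |u - v| := abs_sub_comm v u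
      have h3 := pow_lip m (hub y u hu) (hub y v hv)
      have h4 : |max (y-u) 0 ^ (m+1) - max (y-v) 0 ^ (m+1)|
          ≤ ((m:ℝ)+1) * (|y|+|t₀|+1)^m * |u - v| :=
        le_trans h3 (mul_le_mul_of_nonneg_left h2 (by positivity))
      have hbv : |bound y| = |φ y| * (((m:ℝ)+1) * (|y|+|t₀|+1)^m) := by
        rw [hbound]
        exact abs_of_nonneg (by positivity)
      rw [h1, abs_mul, hbv, mul_assoc]
      exact mul_le_mul_of_nonneg_left h4 (abs_nonneg _)))
    ((hcont.abs.mul (continuous_const.mul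
        (((continuous_abs.add continuous_const).add continuous_const).pow m))).integrable_of_hasCompactSupport
      ((hcs hs).abs.mul_right))
    (by
      have hae : ∀ᵐ y : ℝ, y ≠ t₀ := by
        rw [MeasureTheory.ae_iff]
        have : {y : ℝ | ¬y ≠ t₀} = {t₀} := by ext y; simp
        rw [this]
        exact measure_singleton t₀
      filter_upwards [hae] with y hy
      rcases hy.lt_or_gt with h | h
      · have hev : (fun u => F u y) =ᶠ[nhds t₀] fun _ => (0:ℝ) := by
          filter_upwards [Ioi_mem_nhds h] with u hu
          simp only [hF]
          rw [max_eq_right (by simp at hu; linarith), zero_pow (Nat.succ_ne_zero m), mul_zero]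
        have hval : F' y = 0 := by
          simp only [hF']
          exact Set.indicator_of_notMem (by simp [le_of_lt h]) _
        rw [hval]
        exact (hasDerivAt_const t₀ (0:ℝ)).congr_of_eventuallyEq hev
      · have hd : HasDerivAt (fun u => φ y * (y - u) ^ (m + 1))
            (φ y * (((m:ℝ) + 1) * (y - t₀) ^ m * (-1))) t₀ := by
          have h1 : HasDerivAt (fun u : ℝ => y - u) (-1) t₀ := (hasDerivAt_id t₀).const_sub y
          have h2 := h1.pow (m + 1)
          simp only [Nat.add_sub_cancel, Nat.cast_add, Nat.cast_one] at h2
          exact h2.const_mul (φ y)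
        have hev : (fun u => F u y) =ᶠ[nhds t₀] fun u => φ y * (y - u) ^ (m + 1) := by
          filter_upwards [Iio_mem_nhds h] with u hu
          simp only [hF]
          rw [max_eq_left (by simp at hu; linarith)]
        have hval : F' y = φ y * (((m:ℝ) + 1) * (y - t₀) ^ m * (-1)) := by
          simp only [hF']
          rw [Set.indicator_of_mem (Set.mem_Ioi.mpr h)]
          ring
        rw [hval]
        exact hd.congr_of_eventuallyEq hev)
  have h2 := key.2
  have hGF : (fun u => ∫ y, F u y) = Gk φ (m + 1) := by
    funext u
    rw [G_eq_max]
  rw [hGF] at h2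
  have hFI : (∫ y, F' y) = -((m : ℝ) + 1) * Gk φ m t₀ := by
    rw [hF', integral_indicator measurableSet_Ioi, Gk, MeasureTheory.integral_const_mul]
  rwa [hFI] at h2

lemma phi_zero {φ : ℝ → ℝ} (hcont : Continuous φ)
    (hs : ∀ x : ℝ, x ∉ Set.Icc (-(1/16) : ℝ) (1/16) → φ x = 0)
    (h0 : ∀ t, Gk φ 0 t = 0) : ∀ x, φ x = 0 := by
  have hint : Integrable φ := hcont.integrable_of_hasCompactSupport (hcs hs)
  have hG0 : ∀ t, (∫ y in Set.Ioi t, φ y) = 0 := fun t => by simpa [Gk] using h0 t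
  have hab : ∀ a b : ℝ, a ≤ b → (∫ y in Set.Ioc a b, φ y) = 0 := by
    intro a b h
    have hu := MeasureTheory.setIntegral_union (s := Set.Ioc a b) (t := Set.Ioi b)
      (Set.Ioc_disjoint_Ioi le_rfl) measurableSet_Ioi hint.integrableOn hint.integrableOn (f := φ)
    rw [Set.Ioc_union_Ioi_eq_Ioi h] at hu
    have h1 := hG0 a
    rw [hu, hG0 b] at h1
    linarith
  have hiv : ∀ a b : ℝ, (∫ y in a..b, φ y) = 0 := by
    intro a b
    rcases le_total a b with h | h
    · rw [intervalIntegral.integral_of_le h]; exact hab a b h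
    · rw [intervalIntegral.integral_symm, intervalIntegral.integral_of_le h, hab b a h, neg_zero]
  intro x
  have hd : HasDerivAt (fun u => ∫ y in (x-1)..u, φ y) (φ x) x :=
    intervalIntegral.integral_hasDerivAt_right (hint.intervalIntegrable)
      (hcont.stronglyMeasurableAtFilter _ _) hcont.continuousAt
  rw [show (fun u => ∫ y in (x-1)..u, φ y) = fun _ => (0:ℝ) from funext fun u => hiv _ _] at hd
  exact (hd.unique (hasDerivAt_const x 0))

lemma chain {φ : ℝ → ℝ} (hcont : Continuous φ)
    (hs : ∀ x : ℝ, x ∉ Set.Icc (-(1/16) : ℝ) (1/16) → φ x = 0)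
    (k : ℕ) (h : ∀ t, Gk φ k t = 0) : ∀ x, φ x = 0 := by
  induction k with
  | zero => exact phi_zero hcont hs h
  | succ m ih =>
    apply ih
    intro s
    have hd := G_deriv hcont hs m s
    rw [show Gk φ (m+1) = fun _ => (0:ℝ) from funext h] at hd
    have h1 := hd.unique (hasDerivAt_const s 0)
    have hne : -((m:ℝ)+1) ≠ 0 := neg_ne_zero.mpr (by positivity)
    have h2 : -((m:ℝ)+1) * Gk φ m s = 0 := by linarith
    exact (mul_eq_zero.mp h2).resolve_left hne

lemma moment {φ : ℝ → ℝ} (hcont : Continuous φ)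
    (hs : ∀ x : ℝ, x ∉ Set.Icc (-(1/16) : ℝ) (1/16) → φ x = 0)
    (n : ℕ) (hmom : ∀ m : ℕ, m ≤ n + 1 → ∫ x : ℝ, x ^ m * φ x = 0)
    (j : ℕ) (hj : j ≤ n + 1) (a : ℝ) : (∫ y : ℝ, φ y * (a - y) ^ j) = 0 := by
  have h1 : (fun y : ℝ => φ y * (a - y) ^ j)
      = fun y => ∑ i ∈ Finset.range (j+1),
        ((-1:ℝ) ^ (i+j) * a ^ i * (j.choose i)) * (y ^ (j-i) * φ y) := by
    funext y
    rw [sub_pow, Finset.mul_sum]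
    apply Finset.sum_congr rfl
    intro i _
    ring
  rw [h1, MeasureTheory.integral_finset_sum]
  · apply Finset.sum_eq_zero
    intro i _
    rw [MeasureTheory.integral_const_mul, hmom (j-i) (by omega), mul_zero]
  · intro i _
    apply Integrable.const_mul
    exact (intmul hcont hs _ (continuous_pow _)).congr
      (Filter.Eventually.of_forall fun y => mul_comm _ _)

theorem stmt_4
    (n : ℕ) (φ : ℝ → ℝ)
    (hcont : Continuous φ) (hne : ∃ x : ℝ, φ x ≠ 0)
    (hsupp : ∀ x : ℝ, x ∉ Set.Ioo (-(2 : ℝ) ^ (-4 : ℤ)) ((2 : ℝ) ^ (-4 : ℤ)) → φ x = 0)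
    (hmom : ∀ m : ℕ, m ≤ n + 1 → ∫ x : ℝ, x ^ m * φ x = 0)
    (ψ : ℝ → ℝ) (hψ : MeasureTheory.LocallyIntegrable ψ)
    (A₀ A₁ : ℝ) (hA : A₀ ≠ A₁) (c : ℕ → ℝ)
    (hleft : ∀ x ∈ Set.Icc (0 : ℝ) (1 / 2),
      ψ x = A₀ * (x - 1 / 2) ^ n + ∑ j ∈ Finset.range n, c j * (x - 1 / 2) ^ j)
    (hright : ∀ x ∈ Set.Icc (1 / 2 : ℝ) 1,
      ψ x = A₁ * (x - 1 / 2) ^ n + ∑ j ∈ Finset.range n, c j * (x - 1 / 2) ^ j) :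
    ∃ c₀ ∈ Set.Ioo (0 : ℝ) 1, ∃ a b : ℝ, a < b ∧
      Set.Icc a b ⊆ Set.Icc (1 / 4 : ℝ) (3 / 4) ∧
      ∀ x ∈ Set.Icc a b, c₀ ≤ |∫ y : ℝ, φ y * ψ (x - y)| := by
  have hpow : ((2:ℝ) ^ (-4 : ℤ)) = 1/16 := by norm_num
  have hs'' : ∀ x : ℝ, x ∉ Set.Ioo (-(1/16) : ℝ) (1/16) → φ x = 0 := by
    intro x hx
    apply hsupp
    rw [hpow]
    exact hx
  have hs' : ∀ x : ℝ, x ∉ Set.Icc (-(1/16) : ℝ) (1/16) → φ x = 0 := by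
    intro x hx
    apply hs''
    intro hx2
    exact hx ⟨hx2.1.le, hx2.2.le⟩
  rcases Nat.eq_zero_or_pos n with hn0 | hnpos
  · subst hn0
    exfalso
    have h1 := hleft (1/2) ⟨by norm_num, le_rfl⟩
    have h2 := hright (1/2) ⟨le_rfl, by norm_num⟩
    simp only [pow_zero, Finset.range_zero, Finset.sum_empty, add_zero, mul_one] at h1 h2
    exact hA (h1.symm.trans h2)
  obtain ⟨m, rfl⟩ : ∃ m, n = m + 1 := ⟨n - 1, (Nat.succ_pred_eq_of_pos hnpos).symm⟩
  have hmomgen : ∀ j : ℕ, j ≤ (m + 1) + 1 → ∀ a : ℝ, (∫ y : ℝ, φ y * (a - y) ^ j) = 0 :=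
    fun j hj a => moment hcont hs' (m + 1) hmom j hj a
  -- the convolution formula
  have hconv : ∀ x ∈ Set.Icc (7/16 : ℝ) (9/16), (∫ y : ℝ, φ y * ψ (x - y))
      = (A₀ - A₁) * ((-1:ℝ) ^ (m+1) * Gk φ (m+1) (x - 1/2)) := by
    intro x hx
    have hxl := hx.1
    have hxr := hx.2
    have hpt : ∀ y : ℝ, φ y * ψ (x - y)
        = (φ y * (A₁ * ((x - 1/2) - y) ^ (m+1)
            + ∑ j ∈ Finset.range (m+1), c j * ((x - 1/2) - y) ^ j))
          + ((A₀ - A₁) * ((-1:ℝ) ^ (m+1) * (φ y * max (y - (x - 1/2)) 0 ^ (m+1)))) := by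
      intro y
      by_cases hy : φ y = 0
      · simp [hy]
      · have hyio : y ∈ Set.Ioo (-(1/16) : ℝ) (1/16) := by
          by_contra hcon
          exact hy (hs'' y hcon)
        have hy1 : -(1/16 : ℝ) < y := hyio.1
        have hy2 : y < (1/16 : ℝ) := hyio.2
        have harg : ∀ j : ℕ, ((x - y) - 1/2) ^ j = ((x - 1/2) - y) ^ j := by
          intro j; congr 1; ring
        rcases le_total y (x - 1/2) with hcase | hcase
        · have hmem : x - y ∈ Set.Icc (1/2 : ℝ) 1 := ⟨by linarith, by linarith⟩
          rw [hright _ hmem, max_eq_right (by linarith), zero_pow (Nat.succ_ne_zero m)]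
          simp only [harg]
          ring
        · have hmem : x - y ∈ Set.Icc (0 : ℝ) (1/2) := ⟨by linarith, by linarith⟩
          rw [hleft _ hmem, max_eq_left (by linarith)]
          simp only [harg]
          have hneg : ((x - 1/2) - y) ^ (m+1) = (-1:ℝ) ^ (m+1) * (y - (x - 1/2)) ^ (m+1) := by
            rw [show (x - 1/2) - y = -(y - (x - 1/2)) by ring, neg_pow]
          rw [hneg]
          ring
    have hfun : (fun y : ℝ => φ y * ψ (x - y))
        = fun y => (φ y * (A₁ * ((x - 1/2) - y) ^ (m+1)
            + ∑ j ∈ Finset.range (m+1), c j * ((x - 1/2) - y) ^ j))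
          + ((A₀ - A₁) * ((-1:ℝ) ^ (m+1) * (φ y * max (y - (x - 1/2)) 0 ^ (m+1)))) :=
      funext hpt
    have hint1 : Integrable (fun y : ℝ => φ y * (A₁ * ((x - 1/2) - y) ^ (m+1)
        + ∑ j ∈ Finset.range (m+1), c j * ((x - 1/2) - y) ^ j)) :=
      intmul hcont hs' _
        ((continuous_const.mul ((continuous_const.sub continuous_id).pow _)).add
          (continuous_finset_sum _ fun j _ =>
            continuous_const.mul ((continuous_const.sub continuous_id).pow _)))
    have hint2 : Integrable (fun y : ℝ => φ y * max (y - (x - 1/2)) 0 ^ (m+1)) :=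
      intmul hcont hs' _ (((continuous_id.sub continuous_const).max continuous_const).pow _)
    rw [hfun, MeasureTheory.integral_add hint1 ((hint2.const_mul _).const_mul _)]
    have hz : (∫ y : ℝ, φ y * (A₁ * ((x - 1/2) - y) ^ (m+1)
        + ∑ j ∈ Finset.range (m+1), c j * ((x - 1/2) - y) ^ j)) = 0 := by
      have hsplit : (fun y : ℝ => φ y * (A₁ * ((x - 1/2) - y) ^ (m+1)
          + ∑ j ∈ Finset.range (m+1), c j * ((x - 1/2) - y) ^ j))
          = fun y => A₁ * (φ y * ((x - 1/2) - y) ^ (m+1))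
            + ∑ j ∈ Finset.range (m+1), c j * (φ y * ((x - 1/2) - y) ^ j) := by
        funext y
        rw [mul_add, Finset.mul_sum]
        congr 1
        · ring
        · exact Finset.sum_congr rfl fun j _ => by ring
      have hA1int : Integrable (fun y : ℝ => A₁ * (φ y * ((x - 1/2) - y) ^ (m+1))) :=
        (intmul hcont hs' _ ((continuous_const.sub continuous_id).pow _)).const_mul _
      have hsumint : Integrable (fun y : ℝ =>
          ∑ j ∈ Finset.range (m+1), c j * (φ y * ((x - 1/2) - y) ^ j)) :=
        integrable_finset_sum _ fun j _ =>
          (intmul hcont hs' _ ((continuous_const.sub continuous_id).pow _)).const_mul _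
      rw [hsplit, MeasureTheory.integral_add hA1int hsumint,
        MeasureTheory.integral_const_mul, hmomgen (m+1) (by omega), mul_zero, zero_add]
      rw [MeasureTheory.integral_finset_sum]
      · apply Finset.sum_eq_zero
        intro j hj
        rw [MeasureTheory.integral_const_mul, hmomgen j (by
          have := Finset.mem_range.mp hj; omega), mul_zero]
      · intro j _
        exact (intmul hcont hs' _ ((continuous_const.sub continuous_id).pow _)).const_mul _
    rw [hz, zero_add, MeasureTheory.integral_const_mul, MeasureTheory.integral_const_mul,
      ← G_eq_max φ m (x - 1/2)]
  -- Gk vanishes outside (-1/16, 1/16)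
  have hout : ∀ t : ℝ, t ∉ Set.Ioo (-(1/16) : ℝ) (1/16) → Gk φ (m+1) t = 0 := by
    intro t ht
    rcases le_or_gt t (-(1/16)) with h | h
    · have hfull : Gk φ (m+1) t = ∫ y : ℝ, φ y * (y - t) ^ (m+1) := by
        rw [Gk, ← integral_indicator measurableSet_Ioi]
        congr 1
        funext y
        by_cases hy : y ∈ Set.Ioi t
        · rw [Set.indicator_of_mem hy]
        · rw [Set.indicator_of_notMem hy]
          rw [Set.mem_Ioi, not_lt] at hy
          rw [hs'' y (fun hcon => absurd hcon.1 (by push_neg; linarith)), zero_mul]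
      rw [hfull]
      have heq : (fun y : ℝ => φ y * (y - t) ^ (m+1))
          = fun y => (-1:ℝ) ^ (m+1) * (φ y * (t - y) ^ (m+1)) := by
        funext y
        rw [show (y - t) = -(t - y) by ring, neg_pow]
        ring
      rw [heq, MeasureTheory.integral_const_mul, hmomgen (m+1) (by omega), mul_zero]
    · have h16 : (1/16 : ℝ) ≤ t := by
        by_contra hc
        push_neg at hc
        exact ht ⟨h, hc⟩
      rw [Gk]
      apply MeasureTheory.setIntegral_eq_zero_of_forall_eq_zero
      intro y hy
      rw [Set.mem_Ioi] at hy
      rw [hs'' y (fun hcon => absurd hcon.2 (by push_neg; linarith)), zero_mul]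
  -- a point where Gk is nonzero
  have ht0 : ∃ t₀ ∈ Set.Ioo (-(1/16) : ℝ) (1/16), Gk φ (m+1) t₀ ≠ 0 := by
    by_contra hc
    push_neg at hc
    have hall : ∀ t, Gk φ (m+1) t = 0 := by
      intro t
      by_cases ht : t ∈ Set.Ioo (-(1/16) : ℝ) (1/16)
      · exact hc t ht
      · exact hout t ht
    obtain ⟨x, hx⟩ := hne
    exact hx (chain hcont hs' (m+1) hall x)
  obtain ⟨t₀, ht₀mem, ht₀⟩ := ht0
  have hm1 := ht₀mem.1
  have hm2 := ht₀mem.2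
  have hcG : ContinuousAt (Gk φ (m+1)) t₀ := (G_deriv hcont hs' m t₀).continuousAt
  set ε := |Gk φ (m+1) t₀| / 2 with hε
  have hεpos : 0 < ε := half_pos (abs_pos.mpr ht₀)
  obtain ⟨δ, hδpos, hδ⟩ := Metric.continuousAt_iff.mp hcG ε hεpos
  set r := min (δ/2) (min ((1/16 - t₀)/2) ((t₀ + 1/16)/2)) with hr
  have hrpos : 0 < r :=
    lt_min (half_pos hδpos) (lt_min (by linarith) (by linarith))
  have hr1 : r ≤ (1/16 - t₀)/2 := le_trans (min_le_right _ _) (min_le_left _ _)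
  have hr2 : r ≤ (t₀ + 1/16)/2 := le_trans (min_le_right _ _) (min_le_right _ _)
  have hrδ : r ≤ δ/2 := min_le_left _ _
  refine ⟨min (|A₀ - A₁| * ε) (1/2), ⟨?_, ?_⟩, t₀ + 1/2 - r, t₀ + 1/2 + r, by linarith, ?_, ?_⟩
  · exact lt_min (mul_pos (abs_pos.mpr (sub_ne_zero.mpr hA)) hεpos) (by norm_num)
  · exact lt_of_le_of_lt (min_le_right _ _) (by norm_num)
  · intro x hx
    exact ⟨by linarith [hx.1], by linarith [hx.2]⟩
  · intro x hx
    have h1 := hx.1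
    have h2 := hx.2
    have hxm : x ∈ Set.Icc (7/16 : ℝ) (9/16) := ⟨by linarith, by linarith⟩
    rw [hconv x hxm]
    have hdist : dist (x - 1/2) t₀ < δ := by
      rw [Real.dist_eq]
      have : |x - 1/2 - t₀| ≤ r := abs_le.mpr ⟨by linarith, by linarith⟩
      linarith
    have hG := hδ hdist
    rw [Real.dist_eq] at hG
    have hlow : ε ≤ |Gk φ (m+1) (x - 1/2)| := by
      have habs : |Gk φ (m+1) t₀ - Gk φ (m+1) (x - 1/2)| < ε := by
        rw [abs_sub_comm]
        exact hG
      have h3 := abs_sub_abs_le_abs_sub (Gk φ (m+1) t₀) (Gk φ (m+1) (x - 1/2))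
      rw [hε] at *
      linarith
    calc min (|A₀ - A₁| * ε) (1/2) ≤ |A₀ - A₁| * ε := min_le_left _ _
      _ ≤ |A₀ - A₁| * |Gk φ (m+1) (x - 1/2)| :=
          mul_le_mul_of_nonneg_left hlow (abs_nonneg _)
      _ = |(A₀ - A₁) * ((-1:ℝ) ^ (m+1) * Gk φ (m+1) (x - 1/2))| := by
          rw [abs_mul, abs_mul, abs_pow, abs_neg, abs_one, one_pow, one_mul]
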